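/- Zero duality gap at a stationary point of the SDRE problem (part of Proposition 3): Let t_1, …, t_n ∈ ℝ^b and suppose δ̂ ∈ ℝ^b satisfies ⟨δ̂, t_i⟩ + 1 > 0 for all i and the first-order condition Σ_{i=1}^n t_i/(⟨δ̂, t_i⟩ + 1) = 0. Define μ̂_i := −1/(⟨δ̂, t_i⟩ + 1). Then μ̂ is dual feasible, i.e. μ̂_i < 0 for all i and Σ_{i=1}^n μ̂_i·t_i = 0, and the dual objective equals the primal objective: Σ_{i=1}^n (−log(−μ̂_i) − 1) − Σ_{i=1}^n μ̂_i = Σ_{i=1}^n log(⟨δ̂, t_i⟩ + 1). Moreover the primal ratio values satisfy ⟨δ̂, t_i⟩ + 1 = −1/μ̂_i. -/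

import Mathlib

open Matrix

/-- **Zero duality gap at a stationary point of the SDRE problem** (part of Proposition 3).
If `δ̂` is primal feasible and satisfies the first-order condition
`Σ tᵢ / (⟨δ̂, tᵢ⟩ + 1) = 0`, then `μ̂ᵢ := -1/(⟨δ̂, tᵢ⟩ + 1)` is dual feasible, the dual
objective equals the primal objective, and `⟨δ̂, tᵢ⟩ + 1 = -1/μ̂ᵢ`. -/
theorem sdre_zero_duality_gap {n b : ℕ} (t : Fin n → (Fin b → ℝ))
    (δhat : Fin b → ℝ) (hδ : ∀ i, 0 < δhat ⬝ᵥ t i + 1)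
    (hstat : ∑ i, (δhat ⬝ᵥ t i + 1)⁻¹ • t i = 0)
    (μhat : Fin n → ℝ) (hμhat : ∀ i, μhat i = -(δhat ⬝ᵥ t i + 1)⁻¹) :
    (∀ i, μhat i < 0) ∧
    (∑ i, μhat i • t i = 0) ∧
    ((∑ i, (-Real.log (-μhat i) - 1)) - ∑ i, μhat i
      = ∑ i, Real.log (δhat ⬝ᵥ t i + 1)) ∧
    (∀ i, δhat ⬝ᵥ t i + 1 = -(μhat i)⁻¹) := by
  have hne : ∀ i, δhat ⬝ᵥ t i + 1 ≠ 0 := fun i => ne_of_gt (hδ i)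
  -- dot product with δhat of stationarity:
  have key : δhat ⬝ᵥ (∑ i, (δhat ⬝ᵥ t i + 1)⁻¹ • t i)
      = ∑ i, (δhat ⬝ᵥ t i + 1)⁻¹ * (δhat ⬝ᵥ t i) := by
    simp only [dotProduct, Finset.sum_apply, Pi.smul_apply, smul_eq_mul, Finset.mul_sum]
    rw [Finset.sum_comm]
    exact Finset.sum_congr rfl fun i _ => Finset.sum_congr rfl fun j _ => by ring
  have hdot : ∑ i, (δhat ⬝ᵥ t i + 1)⁻¹ * (δhat ⬝ᵥ t i) = 0 := by
    rw [← key, hstat, dotProduct_zero]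
  have hsum : ∑ i, (δhat ⬝ᵥ t i + 1)⁻¹ = (n : ℝ) := by
    have : ∑ i, ((1 : ℝ) - (δhat ⬝ᵥ t i + 1)⁻¹) = 0 := by
      rw [← hdot]
      refine Finset.sum_congr rfl fun i _ => ?_
      field_simp [hne i]
      ring
    have h2 := Finset.sum_sub_distrib (s := Finset.univ)
      (f := fun _ : Fin n => (1 : ℝ)) (g := fun i => (δhat ⬝ᵥ t i + 1)⁻¹)
    rw [h2] at this
    simp at this
    linarith [this]
  refine ⟨fun i => ?_, ?_, ?_, fun i => ?_⟩
  · rw [hμhat i]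
    simp [inv_pos.mpr (hδ i)]
  · simp only [hμhat, neg_smul, Finset.sum_neg_distrib, hstat, neg_zero]
  · have h1 : ∑ i, (-Real.log (-μhat i) - 1)
        = ∑ i, Real.log (δhat ⬝ᵥ t i + 1) - (n : ℝ) := by
      rw [Finset.sum_sub_distrib]
      simp only [hμhat, neg_neg, Real.log_inv]
      simp
    have h2 : ∑ i, μhat i = -(n : ℝ) := by
      simp only [hμhat]
      rw [Finset.sum_neg_distrib, hsum]
    rw [h1, h2]; ring
  · rw [hμhat i]; rw [inv_neg, neg_neg, inv_inv]
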